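/- Let X be a Banach space with modulus of uniform convexity δ_X(ε) = Aεᵖ for ε ∈ (0,2], A ∈ (0,1/2), p ≥ 2, let Φ(t) = (1/p)tᵖ, and let f be proper convex lsc. Fix z ∈ X and r ≥ max{1, ‖z − prox^Φ_{1,f}(z)‖}. Then with L = 16r·((3p + 2ᵖ)/(2A))^{1/p}, for all x, y ∈ B(z,r) and λ ∈ (0,1]: ‖prox^Φ_{λ,f}(x) − prox^Φ_{λ,f}(y)‖ ≤ max{2‖x−y‖, L‖x−y‖^{1/p}}. -/

import Mathlib

open Real Set

-- (x+h)^p - x^p ≤ p*h*(x+h)^(p-1)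
private lemma rpow_upper {p x h : ℝ} (hp : 2 ≤ p) (hx : 0 ≤ x) (hh : 0 ≤ h) :
    (x + h) ^ p - x ^ p ≤ p * h * (x + h) ^ (p - 1) := by
  rcases eq_or_lt_of_le (by linarith : (0:ℝ) ≤ x + h) with h0 | h0
  · have hx0 : x = 0 := by linarith
    have hh0 : h = 0 := by linarith
    simp [hx0, hh0]
  · have ht : -1 ≤ x / (x + h) - 1 := by
      have : 0 ≤ x / (x + h) := div_nonneg hx h0.le
      linarith
    have hb := one_add_mul_self_le_rpow_one_add ht (by linarith : 1 ≤ p)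
    have h1 : 1 + (x / (x + h) - 1) = x / (x + h) := by ring
    rw [h1] at hb
    rw [div_rpow hx h0.le] at hb
    have hup : (0:ℝ) < (x + h) ^ p := rpow_pos_of_pos h0 p
    have hb' := mul_le_mul_of_nonneg_right hb hup.le
    rw [div_mul_cancel₀ _ (ne_of_gt hup)] at hb'
    have hdiv : (x + h) ^ p / (x + h) = (x + h) ^ (p - 1) := by
      rw [rpow_sub h0, rpow_one]
    have key : (x + h) ^ p - p * h * ((x + h) ^ p / (x + h)) ≤ x ^ p := by
      calc (x + h) ^ p - p * h * ((x + h) ^ p / (x + h))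
          = (1 + p * (x / (x + h) - 1)) * (x + h) ^ p := by field_simp; ring
        _ ≤ x ^ p := hb'
    rw [hdiv] at key
    linarith

-- p*h*(x-h)^(p-1) ≤ x^p - (x-h)^p
private lemma rpow_lower {p x h : ℝ} (hp : 2 ≤ p) (hh : 0 ≤ h) (hhx : h ≤ x) :
    p * h * (x - h) ^ (p - 1) ≤ x ^ p - (x - h) ^ p := by
  rcases eq_or_lt_of_le (by linarith : (0:ℝ) ≤ x - h) with h0 | h0
  · have hzp : (0:ℝ) < p - 1 := by linarith
    rw [← h0, zero_rpow (by linarith : p - 1 ≠ 0), zero_rpow (by linarith : p ≠ 0)]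
    have : 0 ≤ x ^ p := rpow_nonneg (by linarith) p
    linarith
  · have ht : -1 ≤ x / (x - h) - 1 := by
      have : 0 ≤ x / (x - h) := div_nonneg (by linarith) h0.le
      linarith
    have hb := one_add_mul_self_le_rpow_one_add ht (by linarith : 1 ≤ p)
    have h1 : 1 + (x / (x - h) - 1) = x / (x - h) := by ring
    rw [h1, div_rpow (by linarith : (0:ℝ) ≤ x) h0.le] at hb
    have hup : (0:ℝ) < (x - h) ^ p := rpow_pos_of_pos h0 p
    have hb' := mul_le_mul_of_nonneg_right hb hup.le
    rw [div_mul_cancel₀ _ (ne_of_gt hup)] at hb'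
    have hdiv : (x - h) ^ p / (x - h) = (x - h) ^ (p - 1) := by
      rw [rpow_sub h0, rpow_one]
    have key : (x - h) ^ p + p * h * ((x - h) ^ p / (x - h)) ≤ x ^ p := by
      calc (x - h) ^ p + p * h * ((x - h) ^ p / (x - h))
          = (1 + p * (x / (x - h) - 1)) * (x - h) ^ p := by field_simp; ring
        _ ≤ x ^ p := hb'
    rw [hdiv] at key
    linarith

-- h*x^(p-1) ≤ x^p - (x-h)^p
private lemma rpow_lower' {p x h : ℝ} (hp : 2 ≤ p) (hh : 0 ≤ h) (hhx : h ≤ x) :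
    h * x ^ (p - 1) ≤ x ^ p - (x - h) ^ p := by
  rcases eq_or_lt_of_le (le_trans hh hhx) with hx0 | hx0
  · have : h = 0 := le_antisymm (by linarith) hh
    simp [this, ← hx0]
  · have ht : (x - h) / x ≤ 1 := by
      rw [div_le_one hx0]; linarith
    have ht0 : 0 ≤ (x - h) / x := div_nonneg (by linarith) hx0.le
    have key : ((x - h) / x) ^ p ≤ (x - h) / x := by
      rcases eq_or_lt_of_le ht0 with h0 | h0
      · rw [← h0, zero_rpow (by linarith : p ≠ 0)]
      · calc ((x - h) / x) ^ p ≤ ((x - h) / x) ^ (1:ℝ) :=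
              rpow_le_rpow_of_exponent_ge h0 ht (by linarith)
          _ = (x - h) / x := rpow_one _
    rw [div_rpow (by linarith) hx0.le] at key
    have hxp : (0:ℝ) < x ^ p := rpow_pos_of_pos hx0 p
    have key' := mul_le_mul_of_nonneg_right key hxp.le
    rw [div_mul_cancel₀ _ (ne_of_gt hxp)] at key'
    -- key' : (x-h)^p ≤ (x-h)/x * x^p
    have hxp1 : x ^ p / x = x ^ (p - 1) := by rw [rpow_sub hx0, rpow_one]
    have : (x - h) / x * x ^ p = (x - h) * (x ^ p / x) := by ring
    rw [this, hxp1] at key'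
    have hxx : x * x ^ (p - 1) = x ^ p := by
      nth_rewrite 1 [← rpow_one x]
      rw [← rpow_add hx0 1 (p - 1)]
      norm_num
    have hexp : (x - h) * x ^ (p - 1) = x ^ p - h * x ^ (p - 1) := by
      rw [← hxx]; ring
    linarith

-- scalar Clarkson
private lemma clarkson {p a b : ℝ} (hp : 2 ≤ p) (hb : 0 ≤ b) (hba : b ≤ a) :
    ((a + b) / 2) ^ p + ((a - b) / 2) ^ p ≤ (a ^ p + b ^ p) / 2 := by
  have ha : 0 ≤ a := le_trans hb hba
  set x := (a + b) / 2 with hxdef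
  set y := (a - b) / 2 with hydef
  have hx : 0 ≤ x := by positivity
  have hy : 0 ≤ y := by simp [hydef]; linarith
  set N := x * x + y * y with hN
  have hNnn : 0 ≤ N := by positivity
  -- step A : x^p + y^p ≤ N^(p/2)
  have stepA : ∀ t : ℝ, 0 ≤ t → t * t ≤ N → t ^ p ≤ t * t * N ^ ((p - 2) / 2) := by
    intro t ht htN
    rcases eq_or_lt_of_le ht with h0 | h0
    · rw [← h0, zero_rpow (by linarith : p ≠ 0)]
      simp
    · have hNt : t ≤ N ^ ((1:ℝ)/2) := by
        have : t = (t * t) ^ ((1:ℝ)/2) := by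
          rw [show t * t = t ^ (2:ℝ) by rw [show (2:ℝ) = ((2:ℕ):ℝ) by norm_num, rpow_natCast]; ring,
            ← rpow_mul ht]
          norm_num
        rw [this]
        exact rpow_le_rpow (by positivity) htN (by norm_num)
      have e1 : t ^ p = t * t * t ^ (p - 2) := by
        rw [show t * t = t ^ (2:ℝ) by rw [show (2:ℝ) = ((2:ℕ):ℝ) by norm_num, rpow_natCast]; ring,
          ← rpow_add h0]
        ring_nf
      rw [e1]
      have h2 : t ^ (p - 2) ≤ (N ^ ((1:ℝ)/2)) ^ (p - 2) :=
        rpow_le_rpow ht hNt (by linarith)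
      have h3 : (N ^ ((1:ℝ)/2)) ^ (p - 2) = N ^ ((p - 2)/2) := by
        rw [← rpow_mul hNnn]; ring_nf
      rw [h3] at h2
      have : 0 ≤ t * t := by positivity
      nlinarith [rpow_nonneg (rpow_nonneg hNnn ((1:ℝ)/2)) (p-2)]
  have hxx : x * x ≤ N := by nlinarith
  have hyy : y * y ≤ N := by nlinarith
  have hA : x ^ p + y ^ p ≤ N * N ^ ((p - 2)/2) := by
    have h1 := stepA x hx hxx
    have h2 := stepA y hy hyy
    have : x * x * N ^ ((p-2)/2) + y * y * N ^ ((p-2)/2) = N * N ^ ((p-2)/2) := by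
      rw [hN]; ring
    linarith
  have hB : N * N ^ ((p - 2)/2) = N ^ (p / 2) := by
    rcases eq_or_lt_of_le hNnn with h0 | h0
    · rw [← h0, zero_rpow (by intro h; nlinarith : p / 2 ≠ 0)]
      ring
    · nth_rewrite 1 [← rpow_one N]
      rw [← rpow_add h0]
      ring_nf
  -- step C : N^(p/2) ≤ (a^p + b^p)/2  via convexity of t ↦ t^(p/2)
  have hconv := (convexOn_rpow (p := p / 2) (by linarith)).2
    (Set.mem_Ici.mpr (by positivity : (0:ℝ) ≤ a * a))
    (Set.mem_Ici.mpr (by positivity : (0:ℝ) ≤ b * b))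
    (by norm_num : (0:ℝ) ≤ 1/2) (by norm_num : (0:ℝ) ≤ 1/2) (by norm_num)
  simp only [smul_eq_mul] at hconv
  have hNval : (1:ℝ)/2 * (a * a) + 1/2 * (b * b) = N := by rw [hN, hxdef, hydef]; ring
  rw [hNval] at hconv
  have haa : (a * a) ^ (p / 2) = a ^ p := by
    rw [show a * a = a ^ (2:ℝ) by rw [show (2:ℝ) = ((2:ℕ):ℝ) by norm_num, rpow_natCast]; ring,
      ← rpow_mul ha]
    ring_nf
  have hbb : (b * b) ^ (p / 2) = b ^ p := by
    rw [show b * b = b ^ (2:ℝ) by rw [show (2:ℝ) = ((2:ℕ):ℝ) by norm_num, rpow_natCast]; ring,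
      ← rpow_mul hb]
    ring_nf
  rw [haa, hbb] at hconv
  have : x ^ p + y ^ p ≤ N ^ (p/2) := by rw [← hB]; exact hA
  linarith

private lemma key_mid_aux {X : Type*} [NormedAddCommGroup X] [NormedSpace ℝ X]
    {p A : ℝ} (hp : 2 ≤ p) (hA : 0 < A) (hA2 : A < 1/2)
    (hX : ∀ ε ∈ Set.Ioc (0:ℝ) 2, ∀ u v : X, ‖u‖ ≤ 1 → ‖v‖ ≤ 1 → ε ≤ ‖u - v‖ →
      ‖(1/2 : ℝ) • (u + v)‖ ≤ 1 - A * ε ^ p)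
    (u v : X) (hba : ‖v‖ ≤ ‖u‖) :
    2 * A * (‖u - v‖ / 4) ^ p ≤ (‖u‖ ^ p + ‖v‖ ^ p) / 2 - ‖(1/2 : ℝ) • (u + v)‖ ^ p := by
  set a := ‖u‖ with hadef
  set b := ‖v‖ with hbdef
  set s := ‖u - v‖ with hsdef
  have hb0 : 0 ≤ b := norm_nonneg _
  have hs0 : 0 ≤ s := norm_nonneg _
  have hδs : a - b ≤ s := by
    have := abs_norm_sub_norm_le u v
    rw [abs_le] at this
    linarith [this.2]
  have hmid0 : ‖(1/2 : ℝ) • (u + v)‖ ≤ (a + b) / 2 := by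
    rw [norm_smul]
    have := norm_add_le u v
    simp only [Real.norm_eq_abs]
    rw [abs_of_pos (by norm_num : (0:ℝ) < 1/2)]
    linarith
  have hclark := clarkson hp hb0 hba
  have hs4 : (0:ℝ) ≤ s / 4 := by linarith
  rcases le_or_gt (s / 2) (a - b) with hδ | hδ
  · -- big norm gap : Clarkson alone suffices
    have h1 : ‖(1/2 : ℝ) • (u + v)‖ ^ p ≤ ((a + b)/2) ^ p :=
      rpow_le_rpow (norm_nonneg _) hmid0 (by linarith)
    have h2 : (s / 4) ^ p ≤ ((a - b)/2) ^ p :=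
      rpow_le_rpow hs4 (by linarith) (by linarith)
    have h3 : 2 * A * (s/4) ^ p ≤ (s/4) ^ p := by
      nlinarith [rpow_nonneg hs4 p]
    linarith
  · -- small norm gap : use uniform convexity
    have hbpos : 0 < b := by
      rcases eq_or_lt_of_le hb0 with h0 | h0
      · exfalso
        have hv0 : v = 0 := by rw [← norm_eq_zero, ← hbdef, ← h0]
        have hsa : s = a := by rw [hsdef, hv0, sub_zero]
        have hb00 : b = 0 := h0.symm
        rw [hsa, hb00] at hδ
        have ha0 : 0 ≤ a := le_trans hb0 hba
        linarith
      · exact h0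
    have hapos : 0 < a := lt_of_lt_of_le hbpos hba
    have hspos : 0 < s := by linarith
    have hsδ0 : 0 ≤ s - (a - b) := by linarith
    set w := (b/a) • u with hwdef
    have hw_norm : ‖w‖ = b := by
      rw [hwdef, norm_smul, Real.norm_eq_abs, abs_of_pos (div_pos hbpos hapos), ← hadef]
      field_simp
    have h_uw : ‖u - w‖ = a - b := by
      have e : u - w = (1 - b/a) • u := by rw [hwdef, sub_smul, one_smul]
      rw [e, norm_smul, Real.norm_eq_abs, abs_of_nonneg
        (by rw [sub_nonneg]; rw [div_le_one hapos]; exact hba), ← hadef]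
      field_simp
    have h_wv_ge : s - (a - b) ≤ ‖w - v‖ := by
      have e : u - v = (u - w) + (w - v) := by abel
      have := norm_add_le (u - w) (w - v)
      rw [← e, ← hsdef, h_uw] at this
      linarith
    have h_wv_le : ‖w - v‖ ≤ 2 * b := by
      have := norm_sub_le w v
      rw [hw_norm, ← hbdef] at this
      linarith
    set ε := (s - (a - b)) / b with hεdef
    have hε0 : 0 < ε := div_pos (by linarith) hbpos
    have hε2 : ε ≤ 2 := by
      rw [hεdef, div_le_iff₀ hbpos]
      linarith
    set u' := (a⁻¹ : ℝ) • u with hu'def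
    set v' := (b⁻¹ : ℝ) • v with hv'def
    have hu'1 : ‖u'‖ ≤ 1 := by
      rw [hu'def, norm_smul, Real.norm_eq_abs, abs_of_pos (inv_pos.mpr hapos), ← hadef]
      rw [inv_mul_cancel₀ (ne_of_gt hapos)]
    have hv'1 : ‖v'‖ ≤ 1 := by
      rw [hv'def, norm_smul, Real.norm_eq_abs, abs_of_pos (inv_pos.mpr hbpos), ← hbdef]
      rw [inv_mul_cancel₀ (ne_of_gt hbpos)]
    have hdiff : u' - v' = (b⁻¹ : ℝ) • (w - v) := by
      rw [hu'def, hv'def, hwdef, smul_sub, smul_smul]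
      congr 2
      field_simp
    have hεdiff : ε ≤ ‖u' - v'‖ := by
      rw [hdiff, norm_smul, Real.norm_eq_abs, abs_of_pos (inv_pos.mpr hbpos), hεdef]
      rw [div_eq_inv_mul]
      exact mul_le_mul_of_nonneg_left h_wv_ge (inv_pos.mpr hbpos).le
    have hXr := hX ε ⟨hε0, hε2⟩ u' v' hu'1 hv'1 hεdiff
    have hmid2 : ‖(1/2 : ℝ) • (w + v)‖ ≤ b * (1 - A * ε ^ p) := by
      have e : (1/2 : ℝ) • (w + v) = b • ((1/2 : ℝ) • (u' + v')) := by
        rw [hu'def, hv'def, hwdef]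
        match_scalars <;> field_simp <;> ring
      rw [e, norm_smul, Real.norm_eq_abs, abs_of_pos hbpos]
      exact mul_le_mul_of_nonneg_left hXr hbpos.le
    have hbεp : b * (A * ε ^ p) = A * ((s - (a-b)) ^ p / b ^ (p-1)) := by
      rw [hεdef, div_rpow hsδ0 hbpos.le]
      rw [rpow_sub hbpos, rpow_one]
      have hbp : (0:ℝ) < b ^ p := rpow_pos_of_pos hbpos p
      field_simp
    set H := A * ((s - (a-b)) ^ p / b ^ (p-1)) with hHdef
    have hH0 : 0 ≤ H := by
      have : (0:ℝ) < b ^ (p-1) := rpow_pos_of_pos hbpos (p-1)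
      positivity
    have hmid3 : ‖(1/2 : ℝ) • (u + v)‖ ≤ (a + b)/2 - H := by
      have e : (1/2 : ℝ) • (u + v) = (1/2 : ℝ) • (w + v) + (1/2 : ℝ) • (u - w) := by
        module
      have h1 := norm_add_le ((1/2 : ℝ) • (w + v)) ((1/2 : ℝ) • (u - w))
      rw [← e] at h1
      have h2 : ‖(1/2 : ℝ) • (u - w)‖ = (a - b)/2 := by
        rw [norm_smul, Real.norm_eq_abs, abs_of_pos (by norm_num : (0:ℝ) < 1/2), h_uw]
        ring
      have h3 : b * (1 - A * ε ^ p) = b - H := by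
        rw [← hbεp]; ring
      rw [h3] at hmid2
      rw [h2] at h1
      linarith
    have hHle : H ≤ (a + b)/2 := by
      have := norm_nonneg ((1/2 : ℝ) • (u + v))
      linarith
    have hpow : ‖(1/2 : ℝ) • (u + v)‖ ^ p ≤ ((a + b)/2 - H) ^ p :=
      rpow_le_rpow (norm_nonneg _) hmid3 (by linarith)
    have hlow := rpow_lower' hp hH0 hHle
    have hHge : A * (s - (a-b)) ^ p ≤ H * ((a + b)/2) ^ (p-1) := by
      have hab2 : (0:ℝ) < (a + b)/2 := by linarith
      have hratio : (1:ℝ) ≤ ((a + b)/2) ^ (p-1) / b ^ (p-1) := by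
        rw [← div_rpow hab2.le hbpos.le]
        have h1 : (1:ℝ) ≤ (a + b)/2 / b := by
          rw [le_div_iff₀ hbpos]; linarith
        calc (1:ℝ) = 1 ^ (p-1) := (one_rpow _).symm
          _ ≤ ((a + b)/2 / b) ^ (p-1) := rpow_le_rpow (by norm_num) h1 (by linarith)
      have e : H * ((a + b)/2) ^ (p-1)
          = A * (s - (a-b)) ^ p * (((a + b)/2) ^ (p-1) / b ^ (p-1)) := by
        rw [hHdef]
        have : (0:ℝ) < b ^ (p-1) := rpow_pos_of_pos hbpos (p-1)
        field_simp
      rw [e]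
      nth_rewrite 1 [← mul_one (A * (s - (a-b)) ^ p)]
      exact mul_le_mul_of_nonneg_left hratio (by positivity)
    have hgain : 2 * A * (s/4) ^ p ≤ A * (s - (a-b)) ^ p := by
      have h1 : (s/2 : ℝ) ≤ s - (a - b) := by linarith
      have h2 : (s/2 : ℝ) ^ p ≤ (s - (a-b)) ^ p :=
        rpow_le_rpow (by linarith) h1 (by linarith)
      have h3 : (s/2 : ℝ) ^ p = 2 ^ p * (s/4) ^ p := by
        rw [← mul_rpow (by norm_num : (0:ℝ) ≤ 2) hs4]
        congr 1
        ring
      have h4 : (2:ℝ) ≤ 2 ^ p := by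
        calc (2:ℝ) = 2 ^ (1:ℝ) := (rpow_one 2).symm
          _ ≤ 2 ^ p := rpow_le_rpow_of_exponent_le (by norm_num) (by linarith)
      have h5 : 2 * (s/4) ^ p ≤ 2 ^ p * (s/4) ^ p := by
        exact mul_le_mul_of_nonneg_right h4 (rpow_nonneg hs4 p)
      have h6 : 2 * (s/4) ^ p ≤ (s - (a-b)) ^ p := by linarith
      calc 2 * A * (s/4) ^ p = A * (2 * (s/4) ^ p) := by ring
        _ ≤ A * ((s - (a-b)) ^ p) := mul_le_mul_of_nonneg_left h6 hA.le
    have hgap0 : (0:ℝ) ≤ ((a-b)/2) ^ p := rpow_nonneg (by linarith) p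
    linarith

private lemma key_mid {X : Type*} [NormedAddCommGroup X] [NormedSpace ℝ X]
    {p A : ℝ} (hp : 2 ≤ p) (hA : 0 < A) (hA2 : A < 1/2)
    (hX : ∀ ε ∈ Set.Ioc (0:ℝ) 2, ∀ u v : X, ‖u‖ ≤ 1 → ‖v‖ ≤ 1 → ε ≤ ‖u - v‖ →
      ‖(1/2 : ℝ) • (u + v)‖ ≤ 1 - A * ε ^ p)
    (u v : X) :
    2 * A * (‖u - v‖ / 4) ^ p ≤ (‖u‖ ^ p + ‖v‖ ^ p) / 2 - ‖(1/2 : ℝ) • (u + v)‖ ^ p := by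
  rcases le_total ‖v‖ ‖u‖ with h | h
  · exact key_mid_aux hp hA hA2 hX u v h
  · have := key_mid_aux hp hA hA2 hX v u h
    rw [norm_sub_rev v u, add_comm v u] at this
    linarith

private lemma prox_ne_top {X : Type*} [NormedAddCommGroup X] [NormedSpace ℝ X]
    {p : ℝ} (f : X → EReal) (hfproper : ∃ x, f x ≠ ⊤)
    (prox : ℝ → X → X)
    (hprox : ∀ lam > (0:ℝ), ∀ w y : X,
      f (prox lam w) + ((‖w - prox lam w‖ ^ p / (p * lam ^ (p - 1)) : ℝ) : EReal) ≤
        f y + ((‖w - y‖ ^ p / (p * lam ^ (p - 1)) : ℝ) : EReal))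
    {lam : ℝ} (hlam : 0 < lam) (w : X) : f (prox lam w) ≠ ⊤ := by
  obtain ⟨y₀, hy₀⟩ := hfproper
  intro hT
  have h := hprox lam hlam w y₀
  rw [hT, EReal.top_add_of_ne_bot (EReal.coe_ne_bot _)] at h
  exact (EReal.add_lt_top hy₀ (EReal.coe_ne_top _)).ne (top_le_iff.mp h)

private lemma extract {X : Type*} [NormedAddCommGroup X] [NormedSpace ℝ X]
    {p : ℝ} (f : X → EReal)
    (hfconv : ∀ x y : X, ∀ t ∈ Set.Icc (0:ℝ) 1,
      f (t • x + (1 - t) • y) ≤ ((t : ℝ) : EReal) * f x + ((1 - t : ℝ) : EReal) * f y)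
    (prox : ℝ → X → X)
    (hprox : ∀ lam > (0:ℝ), ∀ w y : X,
      f (prox lam w) + ((‖w - prox lam w‖ ^ p / (p * lam ^ (p - 1)) : ℝ) : EReal) ≤
        f y + ((‖w - y‖ ^ p / (p * lam ^ (p - 1)) : ℝ) : EReal))
    {lam : ℝ} (hlam : 0 < lam) (w u₁ u₂ : X) {t : ℝ} (ht : t ∈ Set.Icc (0:ℝ) 1)
    {G Q1 Q2 : ℝ} (hG : f (prox lam w) = (G : EReal))
    (h1 : f u₁ = (Q1 : EReal)) (h2 : f u₂ = (Q2 : EReal)) :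
    G + ‖w - prox lam w‖ ^ p / (p * lam ^ (p - 1)) ≤
      t * Q1 + (1 - t) * Q2 + ‖w - (t • u₁ + (1 - t) • u₂)‖ ^ p / (p * lam ^ (p - 1)) := by
  have h := hprox lam hlam w (t • u₁ + (1 - t) • u₂)
  have hc := hfconv u₁ u₂ t ht
  rw [hG] at h
  rw [h1, h2] at hc
  have h3 : f (t • u₁ + (1 - t) • u₂)
      + ((‖w - (t • u₁ + (1 - t) • u₂)‖ ^ p / (p * lam ^ (p - 1)) : ℝ) : EReal)
      ≤ ((t * Q1 + (1 - t) * Q2 + ‖w - (t • u₁ + (1 - t) • u₂)‖ ^ p / (p * lam ^ (p - 1)) : ℝ) : EReal) := by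
    calc f (t • u₁ + (1 - t) • u₂) + ((‖w - (t • u₁ + (1 - t) • u₂)‖ ^ p / (p * lam ^ (p - 1)) : ℝ) : EReal)
        ≤ (((t : ℝ) : EReal) * (Q1 : EReal) + ((1 - t : ℝ) : EReal) * (Q2 : EReal))
          + ((‖w - (t • u₁ + (1 - t) • u₂)‖ ^ p / (p * lam ^ (p - 1)) : ℝ) : EReal) :=
          add_le_add hc le_rfl
      _ = _ := by norm_cast
  have h4 : ((G + ‖w - prox lam w‖ ^ p / (p * lam ^ (p - 1)) : ℝ) : EReal)
      ≤ ((t * Q1 + (1 - t) * Q2 + ‖w - (t • u₁ + (1 - t) • u₂)‖ ^ p / (p * lam ^ (p - 1)) : ℝ) : EReal) := by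
    calc ((G + ‖w - prox lam w‖ ^ p / (p * lam ^ (p - 1)) : ℝ) : EReal)
        = (G : EReal) + ((‖w - prox lam w‖ ^ p / (p * lam ^ (p - 1)) : ℝ) : EReal) := by norm_cast
      _ ≤ _ := le_trans h h3
  exact_mod_cast h4

set_option maxHeartbeats 1000000 in
private lemma disp {X : Type*} [NormedAddCommGroup X] [NormedSpace ℝ X]
    {p : ℝ} (hp : 2 ≤ p) (f : X → EReal)
    (hfbot : ∀ x, f x ≠ ⊥) (hfproper : ∃ x, f x ≠ ⊤)
    (hfconv : ∀ x y : X, ∀ t ∈ Set.Icc (0:ℝ) 1,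
      f (t • x + (1 - t) • y) ≤ ((t : ℝ) : EReal) * f x + ((1 - t : ℝ) : EReal) * f y)
    (prox : ℝ → X → X)
    (hprox : ∀ lam > (0:ℝ), ∀ w y : X,
      f (prox lam w) + ((‖w - prox lam w‖ ^ p / (p * lam ^ (p - 1)) : ℝ) : EReal) ≤
        f y + ((‖w - y‖ ^ p / (p * lam ^ (p - 1)) : ℝ) : EReal))
    (z : X) (r : ℝ) (hr : max 1 ‖z - prox 1 z‖ ≤ r)
    {lam : ℝ} (hlam : lam ∈ Set.Ioc (0:ℝ) 1) {w : X} (hw : w ∈ Metric.closedBall z r) :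
    ‖w - prox lam w‖ ≤ 5 * r := by
  have hp0 : (0:ℝ) < p := by linarith
  have hr1 : (1:ℝ) ≤ r := le_trans (le_max_left _ _) hr
  have hγr : ‖z - prox 1 z‖ ≤ r := le_trans (le_max_right _ _) hr
  by_contra hcon
  push_neg at hcon
  set α := ‖w - prox lam w‖ with hαdef
  set γ := ‖z - prox 1 z‖ with hγdef
  have hα5 : 5 * r < α := hcon
  have hα0 : 0 < α := by linarith
  have hrα : 0 < r + α := by linarith
  -- finiteness
  have hFq := EReal.coe_toReal (prox_ne_top f hfproper prox hprox hlam.1 w) (hfbot _)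
  have hFz := EReal.coe_toReal (prox_ne_top f hfproper prox hprox one_pos z) (hfbot _)
  set Fq := (f (prox lam w)).toReal with hFqdef
  set Fz := (f (prox 1 z)).toReal with hFzdef
  set t := r / (r + α) with htdef
  have ht0 : 0 < t := div_pos (by linarith) hrα
  have ht1 : t < 1 := by
    rw [htdef, div_lt_one hrα]; linarith
  have htIcc : t ∈ Set.Icc (0:ℝ) 1 := ⟨ht0.le, ht1.le⟩
  set D := p * lam ^ (p - 1) with hDdef
  have hlamp : 0 < lam ^ (p - 1) := rpow_pos_of_pos hlam.1 (p - 1)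
  have hD : 0 < D := by positivity
  have hDp : D ≤ p := by
    have h1 : lam ^ (p - 1) ≤ 1 := rpow_le_one hlam.1.le hlam.2 (by linarith)
    nlinarith
  -- the two extracted inequalities
  have lA := extract f hfconv prox hprox hlam.1 w (prox 1 z) (prox lam w) htIcc
    hFq.symm hFz.symm hFq.symm
  have lB := extract f hfconv prox hprox one_pos z (prox lam w) (prox 1 z) htIcc
    hFz.symm hFq.symm hFz.symm
  rw [one_rpow, mul_one] at lB
  -- geometry
  have hwz : ‖w - z‖ ≤ r := by
    rw [← dist_eq_norm]; exact Metric.mem_closedBall.mp hw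
  have hwz₁ : ‖w - prox 1 z‖ ≤ 2 * r := by
    calc ‖w - prox 1 z‖ = ‖(w - z) + (z - prox 1 z)‖ := by abel_nf
      _ ≤ ‖w - z‖ + ‖z - prox 1 z‖ := norm_add_le _ _
      _ ≤ 2 * r := by rw [← hγdef]; linarith
  have hzq : ‖z - prox lam w‖ ≤ r + α := by
    calc ‖z - prox lam w‖ = ‖-(w - z) + (w - prox lam w)‖ := by abel_nf
      _ ≤ ‖-(w - z)‖ + ‖w - prox lam w‖ := norm_add_le _ _
      _ ≤ r + α := by rw [norm_neg, ← hαdef]; linarith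
  set θ := α - 2 * r with hθdef
  have hθ0 : 0 < θ := by rw [hθdef]; linarith
  have hθα : θ ≤ α := by rw [hθdef]; linarith
  have htθ : 0 ≤ t * θ := by positivity
  have htθα : t * θ ≤ α := by nlinarith
  have hwwt : ‖w - (t • prox 1 z + (1 - t) • prox lam w)‖ ≤ α - t * θ := by
    have e : w - (t • prox 1 z + (1 - t) • prox lam w)
        = (1 - t) • (w - prox lam w) + t • (w - prox 1 z) := by module
    rw [e]
    calc ‖(1 - t) • (w - prox lam w) + t • (w - prox 1 z)‖
        ≤ ‖(1 - t) • (w - prox lam w)‖ + ‖t • (w - prox 1 z)‖ := norm_add_le _ _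
      _ = (1 - t) * α + t * ‖w - prox 1 z‖ := by
          rw [norm_smul, norm_smul, Real.norm_eq_abs, Real.norm_eq_abs,
            abs_of_nonneg (by linarith : (0:ℝ) ≤ 1 - t), abs_of_nonneg ht0.le, ← hαdef]
      _ ≤ (1 - t) * α + t * (2 * r) := by
          have := mul_le_mul_of_nonneg_left hwz₁ ht0.le
          linarith
      _ = α - t * θ := by rw [hθdef]; ring
  have htrα : t * (r + α) = r := by
    rw [htdef]; field_simp
  have hzvt : ‖z - (t • prox lam w + (1 - t) • prox 1 z)‖ ≤ γ + r := by
    have e : z - (t • prox lam w + (1 - t) • prox 1 z)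
        = (1 - t) • (z - prox 1 z) + t • (z - prox lam w) := by module
    rw [e]
    calc ‖(1 - t) • (z - prox 1 z) + t • (z - prox lam w)‖
        ≤ ‖(1 - t) • (z - prox 1 z)‖ + ‖t • (z - prox lam w)‖ := norm_add_le _ _
      _ = (1 - t) * γ + t * ‖z - prox lam w‖ := by
          rw [norm_smul, norm_smul, Real.norm_eq_abs, Real.norm_eq_abs,
            abs_of_nonneg (by linarith : (0:ℝ) ≤ 1 - t), abs_of_nonneg ht0.le, ← hγdef]
      _ ≤ (1 - t) * γ + t * (r + α) := by
          have := mul_le_mul_of_nonneg_left hzq ht0.le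
          linarith
      _ ≤ γ + r := by
          have hγ0 : 0 ≤ γ := norm_nonneg _
          have := mul_nonneg ht0.le hγ0
          linarith [htrα]
  -- turn into rpow inequalities
  have hαtθ0 : 0 ≤ α - t * θ := by linarith
  have hγ0 : 0 ≤ γ := norm_nonneg _
  set X := (α - t * θ) ^ p - α ^ p with hXdef
  set Y := (γ + r) ^ p - γ ^ p with hYdef
  have hX0 : X ≤ 0 := by
    rw [hXdef]
    have := rpow_le_rpow hαtθ0 (by linarith : α - t * θ ≤ α) hp0.le
    linarith
  have lA' : t * Fq - t * Fz ≤ X / D := by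
    have h1 : ‖w - (t • prox 1 z + (1 - t) • prox lam w)‖ ^ p ≤ (α - t * θ) ^ p :=
      rpow_le_rpow (norm_nonneg _) hwwt hp0.le
    have h2 : ‖w - (t • prox 1 z + (1 - t) • prox lam w)‖ ^ p / D ≤ (α - t * θ) ^ p / D :=
      (div_le_div_iff_of_pos_right hD).mpr h1
    have h3 : X / D = (α - t * θ) ^ p / D - α ^ p / D := by
      rw [hXdef]; ring
    rw [← hαdef] at lA
    linarith
  have lB' : t * Fz - t * Fq ≤ Y / p := by
    have h1 : ‖z - (t • prox lam w + (1 - t) • prox 1 z)‖ ^ p ≤ (γ + r) ^ p :=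
      rpow_le_rpow (norm_nonneg _) hzvt hp0.le
    have h2 : ‖z - (t • prox lam w + (1 - t) • prox 1 z)‖ ^ p / p
        ≤ (γ + r) ^ p / p := (div_le_div_iff_of_pos_right hp0).mpr h1
    have h3 : Y / p = (γ + r) ^ p / p - γ ^ p / p := by
      rw [hYdef]; ring
    rw [← hγdef] at lB
    linarith
  have hXDp : X / D ≤ X / p := by
    rw [div_le_div_iff₀ hD hp0]
    nlinarith [mul_le_mul_of_nonpos_left hDp hX0]
  have hsum : 0 ≤ X + Y := by
    have h1 : 0 ≤ X / p + Y / p := by linarith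
    rw [← add_div] at h1
    by_contra hneg
    push_neg at hneg
    have : (X + Y) / p < 0 := div_neg_of_neg_of_pos hneg hp0
    linarith
  -- now the scalar contradiction
  clear_value Fq Fz α γ t D X Y
  clear lA lB lA' lB' hXDp hFq hFz hFqdef hFzdef Fq Fz hw hwwt hzvt hX0 hDdef hD hDp hlamp
  have k1 : p * (t * θ) * (α - t * θ) ^ (p - 1) ≤ α ^ p - (α - t * θ) ^ p :=
    rpow_lower hp htθ htθα
  have k3 : (γ + r) ^ p - γ ^ p ≤ p * r * (γ + r) ^ (p - 1) :=
    rpow_upper hp hγ0 (by linarith)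
  have k4 : (γ + r) ^ (p - 1) ≤ (2 * r) ^ (p - 1) :=
    rpow_le_rpow (by linarith) (by linarith) (by linarith)
  set T := (2 * r) ^ (p - 1) with hTdef
  clear_value T
  have hT0 : 0 < T := by
    rw [hTdef]; exact rpow_pos_of_pos (by linarith) _
  have k5 : ((5/6 : ℝ) * α) ^ (p - 1) ≤ (α - t * θ) ^ (p - 1) := by
    apply rpow_le_rpow (by linarith) _ (by linarith)
    -- α - t*θ ≥ (1-t)*α ≥ (5/6)α
    have h1 : t * θ ≤ t * α := by nlinarith
    have h2 : (1 - t) * α = α * α / (r + α) := by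
      rw [htdef]; field_simp; ring
    have h3 : (5/6 : ℝ) * α ≤ α * α / (r + α) := by
      rw [le_div_iff₀ hrα]
      nlinarith
    nlinarith
  set B := ((5/6 : ℝ) * α) ^ (p - 1) with hBdef
  clear_value B
  have hB0 : 0 < B := by
    rw [hBdef]; exact rpow_pos_of_pos (by positivity) _
  have k6 : (25/12 : ℝ) * T ≤ B := by
    have h1 : ((25/12 : ℝ) * (2 * r)) ^ (p - 1) ≤ B := by
      rw [hBdef]
      apply rpow_le_rpow (by linarith) _ (by linarith)
      linarith
    have h2 : ((25/12 : ℝ) * (2 * r)) ^ (p - 1) = (25/12 : ℝ) ^ (p - 1) * T := by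
      rw [hTdef, ← mul_rpow (by norm_num) (by linarith)]
    have h3 : (25/12 : ℝ) ≤ (25/12 : ℝ) ^ (p - 1) := by
      calc (25/12 : ℝ) = (25/12 : ℝ) ^ (1:ℝ) := (rpow_one _).symm
        _ ≤ (25/12 : ℝ) ^ (p - 1) := rpow_le_rpow_of_exponent_le (by norm_num) (by linarith)
    have h4 := mul_le_mul_of_nonneg_right h3 hT0.le
    rw [h2] at h1
    linarith
  -- combine : p*t*θ*E ≤ p*r*T with E ≥ B
  have k7 : p * (t * θ) * B ≤ p * r * T := by
    have h1 : p * (t * θ) * B ≤ p * (t * θ) * (α - t * θ) ^ (p - 1) := by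
      apply mul_le_mul_of_nonneg_left k5 (by positivity)
    have h2 : α ^ p - (α - t * θ) ^ p ≤ (γ + r) ^ p - γ ^ p := by
      rw [hXdef, hYdef] at hsum; linarith
    have h3 : p * r * (γ + r) ^ (p - 1) ≤ p * r * T :=
      mul_le_mul_of_nonneg_left k4 (by positivity)
    exact le_trans h1 (le_trans k1 (le_trans h2 (le_trans k3 h3)))
  -- divide by p and multiply by (r+α)/r
  have k8 : θ * B ≤ (r + α) * T := by
    have k7' : p * (t * θ * B) ≤ p * (r * T) := by linarith [k7]
    have h1 : t * θ * B ≤ r * T := le_of_mul_le_mul_left k7' hp0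
    have h2 : t * θ * B = r * (θ * B) / (r + α) := by
      rw [htdef]; field_simp
    rw [h2, div_le_iff₀ hrα] at h1
    have h4 : r * (θ * B) ≤ r * ((r + α) * T) := by linarith
    exact le_of_mul_le_mul_left h4 (by linarith : (0:ℝ) < r)
  -- final numeric contradiction
  have hf1 : (3/5 : ℝ) * α * ((25/12 : ℝ) * T) ≤ θ * B := by
    apply mul_le_mul (by rw [hθdef]; linarith) k6 (by positivity) (by positivity)
  have hf2 : (r + α) * T ≤ (6/5 : ℝ) * α * T := by
    nlinarith
  nlinarith [mul_pos hα0 hT0]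

set_option maxHeartbeats 1000000

/-- Hölder continuity of the proximal mapping for `Φ(t) = (1/p)tᵖ` in a space with
modulus of uniform convexity `A εᵖ`. -/
theorem stmt_16 {X : Type*} [NormedAddCommGroup X] [NormedSpace ℝ X] [CompleteSpace X]
    (p A : ℝ) (hp : 2 ≤ p) (hA : 0 < A) (hA2 : A < 1/2)
    (hX : ∀ ε ∈ Set.Ioc (0:ℝ) 2, ∀ u v : X, ‖u‖ ≤ 1 → ‖v‖ ≤ 1 → ε ≤ ‖u - v‖ →
      ‖(1/2 : ℝ) • (u + v)‖ ≤ 1 - A * ε ^ p)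
    (f : X → EReal) (hfbot : ∀ x, f x ≠ ⊥) (hfproper : ∃ x, f x ≠ ⊤)
    (hfconv : ∀ x y : X, ∀ t ∈ Set.Icc (0:ℝ) 1,
      f (t • x + (1 - t) • y) ≤ ((t : ℝ) : EReal) * f x + ((1 - t : ℝ) : EReal) * f y)
    (hflsc : LowerSemicontinuous f)
    (prox : ℝ → X → X)
    (hprox : ∀ lam > (0:ℝ), ∀ w y : X,
      f (prox lam w) + ((‖w - prox lam w‖ ^ p / (p * lam ^ (p - 1)) : ℝ) : EReal) ≤
        f y + ((‖w - y‖ ^ p / (p * lam ^ (p - 1)) : ℝ) : EReal))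
    (z : X) (r : ℝ) (hr : max 1 ‖z - prox 1 z‖ ≤ r) :
    ∀ x ∈ Metric.closedBall z r, ∀ y ∈ Metric.closedBall z r, ∀ lam ∈ Set.Ioc (0:ℝ) 1,
      ‖prox lam x - prox lam y‖ ≤
        max (2 * ‖x - y‖)
          (16 * r * ((3 * p + 2 ^ p) / (2 * A)) ^ (1 / p) * ‖x - y‖ ^ (1 / p)) := by
  intro x hx y hy lam hlam
  have hp0 : (0:ℝ) < p := by linarith
  have hr1 : (1:ℝ) ≤ r := le_trans (le_max_left _ _) hr
  -- finiteness of f at the two prox points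
  have hF1 := EReal.coe_toReal (prox_ne_top f hfproper prox hprox hlam.1 x) (hfbot _)
  have hF2 := EReal.coe_toReal (prox_ne_top f hfproper prox hprox hlam.1 y) (hfbot _)
  have ht : (1/2 : ℝ) ∈ Set.Icc (0:ℝ) 1 := by norm_num
  have m1 := extract f hfconv prox hprox hlam.1 x (prox lam x) (prox lam y) ht
    hF1.symm hF1.symm hF2.symm
  have m2 := extract f hfconv prox hprox hlam.1 y (prox lam x) (prox lam y) ht
    hF2.symm hF1.symm hF2.symm
  have hα5 : ‖x - prox lam x‖ ≤ 5 * r := disp hp f hfbot hfproper hfconv prox hprox z r hr hlam hx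
  have hβ5 : ‖y - prox lam y‖ ≤ 5 * r := disp hp f hfbot hfproper hfconv prox hprox z r hr hlam hy
  have k1 := key_mid hp hA hA2 hX (x - prox lam x) (x - prox lam y)
  have k2 := key_mid hp hA hA2 hX (y - prox lam y) (y - prox lam x)
  -- vector identities
  have e1 : (1/2 : ℝ) • ((x - prox lam x) + (x - prox lam y))
      = x - ((1/2 : ℝ) • prox lam x + (1 - 1/2 : ℝ) • prox lam y) := by
    match_scalars <;> ring
  have e2 : (1/2 : ℝ) • ((y - prox lam y) + (y - prox lam x))
      = y - ((1/2 : ℝ) • prox lam x + (1 - 1/2 : ℝ) • prox lam y) := by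
    match_scalars <;> ring
  have e3 : (x - prox lam x) - (x - prox lam y) = prox lam y - prox lam x := by abel
  have e4 : (y - prox lam y) - (y - prox lam x) = prox lam x - prox lam y := by abel
  rw [e1, e3, norm_sub_rev (prox lam y)] at k1
  rw [e2, e4] at k2
  -- abbreviations (real numbers only)
  set s := ‖prox lam x - prox lam y‖ with hs
  set da := ‖x - y‖ with hda
  set aa := ‖x - prox lam x‖ with haa
  set bb := ‖y - prox lam y‖ with hbb
  set a' := ‖x - prox lam y‖ with ha'
  set b' := ‖y - prox lam x‖ with hb'
  set Qx := ‖x - ((1/2 : ℝ) • prox lam x + (1 - 1/2 : ℝ) • prox lam y)‖ with hQx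
  set Qy := ‖y - ((1/2 : ℝ) • prox lam x + (1 - 1/2 : ℝ) • prox lam y)‖ with hQy
  set F1 := (f (prox lam x)).toReal
  set F2 := (f (prox lam y)).toReal
  set D := p * lam ^ (p - 1) with hD
  have hlamp : 0 < lam ^ (p - 1) := rpow_pos_of_pos hlam.1 (p - 1)
  have hD0 : 0 < D := by rw [hD]; positivity
  -- sum of the two midpoint inequalities
  have hsum : aa ^ p + bb ^ p ≤ Qx ^ p + Qy ^ p := by
    have h1 : (aa ^ p + bb ^ p) / D ≤ (Qx ^ p + Qy ^ p) / D := by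
      rw [add_div, add_div]
      linarith only [m1, m2]
    exact (div_le_div_iff_of_pos_right hD0).mp h1
  -- positivity and basic bounds
  clear m1 m2 hF1 hF2 hprox hfconv hfproper hfbot hflsc hX
  clear_value s da aa bb a' b' Qx Qy F1 F2 D
  clear F1 F2 hD hD0 hlamp D
  have hs0 : 0 ≤ s := by rw [hs]; exact norm_nonneg _
  have hda0 : 0 ≤ da := by rw [hda]; exact norm_nonneg _
  have haa0 : 0 ≤ aa := by rw [haa]; exact norm_nonneg _
  have hbb0 : 0 ≤ bb := by rw [hbb]; exact norm_nonneg _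
  have hd2r : da ≤ 2 * r := by
    rw [hda]
    calc ‖x - y‖ ≤ ‖x - z‖ + ‖z - y‖ := by
          have e : x - y = (x - z) + (z - y) := by abel
          rw [e]; exact norm_add_le _ _
      _ ≤ 2 * r := by
          have h1 : ‖x - z‖ ≤ r := by rw [← dist_eq_norm]; exact Metric.mem_closedBall.mp hx
          have h2 : ‖z - y‖ ≤ r := by
            rw [← dist_eq_norm, dist_comm]; exact Metric.mem_closedBall.mp hy
          linarith
  have ha'0 : 0 ≤ a' := by rw [ha']; exact norm_nonneg _
  have hb'0 : 0 ≤ b' := by rw [hb']; exact norm_nonneg _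
  have htr1 : a' ≤ bb + da := by
    rw [ha', hbb, hda]
    have e : x - prox lam y = (x - y) + (y - prox lam y) := by abel
    rw [e]
    have := norm_add_le (x - y) (y - prox lam y)
    linarith
  have htr2 : b' ≤ aa + da := by
    rw [hb', haa, hda]
    have e : y - prox lam x = -(x - y) + (x - prox lam x) := by abel
    rw [e]
    have := norm_add_le (-(x - y)) (x - prox lam x)
    rw [norm_neg] at this
    linarith
  -- combine : 4A(s/4)^p ≤ p*da*(7r)^(p-1)
  have c1 : a' ^ p ≤ (bb + da) ^ p := rpow_le_rpow ha'0 htr1 hp0.le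
  have c2 : (bb + da) ^ p - bb ^ p ≤ p * da * (bb + da) ^ (p - 1) := rpow_upper hp hbb0 hda0
  have c3 : (bb + da) ^ (p - 1) ≤ (7 * r) ^ (p - 1) :=
    rpow_le_rpow (by linarith) (by linarith) (by linarith)
  have c4 : p * da * (bb + da) ^ (p - 1) ≤ p * da * (7 * r) ^ (p - 1) :=
    mul_le_mul_of_nonneg_left c3 (by positivity)
  have d1 : b' ^ p ≤ (aa + da) ^ p := rpow_le_rpow hb'0 htr2 hp0.le
  have d2 : (aa + da) ^ p - aa ^ p ≤ p * da * (aa + da) ^ (p - 1) := rpow_upper hp haa0 hda0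
  have d3 : (aa + da) ^ (p - 1) ≤ (7 * r) ^ (p - 1) :=
    rpow_le_rpow (by linarith) (by linarith) (by linarith)
  have d4 : p * da * (aa + da) ^ (p - 1) ≤ p * da * (7 * r) ^ (p - 1) :=
    mul_le_mul_of_nonneg_left d3 (by positivity)
  have main : 4 * A * (s / 4) ^ p ≤ p * da * (7 * r) ^ (p - 1) := by
    linarith only [k1, k2, hsum, c1, c2, c4, d1, d2, d4]
  -- final conversion
  have h2p : (0:ℝ) < 2 ^ p := rpow_pos_of_pos (by norm_num) p
  have hC0 : (0:ℝ) < (3 * p + 2 ^ p) / (2 * A) := by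
    apply div_pos (by linarith) (by linarith)
  have hCp : 0 ≤ ((3 * p + 2 ^ p) / (2 * A)) ^ (1 / p) := rpow_nonneg hC0.le _
  have hdap : 0 ≤ da ^ (1 / p) := rpow_nonneg hda0 _
  have hK0 : 0 ≤ 16 * r * ((3 * p + 2 ^ p) / (2 * A)) ^ (1 / p) * da ^ (1 / p) :=
    mul_nonneg (mul_nonneg (by linarith) hCp) hdap
  have hfin : s ≤ 16 * r * ((3 * p + 2 ^ p) / (2 * A)) ^ (1 / p) * da ^ (1 / p) := by
    by_contra hcon
    push_neg at hcon
    have hlt := rpow_lt_rpow hK0 hcon hp0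
    -- compute K^p
    have hKp : (16 * r * ((3 * p + 2 ^ p) / (2 * A)) ^ (1 / p) * da ^ (1 / p)) ^ p
        = (16 * r) ^ p * ((3 * p + 2 ^ p) / (2 * A)) * da := by
      rw [mul_rpow (mul_nonneg (by linarith : (0:ℝ) ≤ 16 * r) hCp) hdap,
        mul_rpow (by linarith : (0:ℝ) ≤ 16 * r) hCp,
        ← rpow_mul hC0.le, ← rpow_mul hda0,
        one_div_mul_cancel (ne_of_gt hp0), rpow_one, rpow_one]
    rw [hKp] at hlt
    -- compute s^p
    have hsp : s ^ p = 4 ^ p * (s / 4) ^ p := by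
      rw [← mul_rpow (by norm_num : (0:ℝ) ≤ 4) (by linarith : (0:ℝ) ≤ s / 4)]
      congr 1
      ring
    -- the coefficient inequality
    set P := (28 * r) ^ (p - 1) with hPdef
    have hP0 : 0 < P := by rw [hPdef]; positivity
    have u1 : (16 * r) ^ p * (2:ℝ) ^ p = (32 * r) ^ p := by
      rw [← mul_rpow (by linarith : (0:ℝ) ≤ 16 * r) (by norm_num : (0:ℝ) ≤ 2)]
      congr 1
      ring
    have u2 : (32 * r) * (32 * r) ^ (p - 1) = (32 * r) ^ p := by
      nth_rewrite 1 [← rpow_one (32 * r)]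
      rw [← rpow_add (by linarith : (0:ℝ) < 32 * r)]
      congr 1
      ring
    have u3 : (4:ℝ) ^ p = 4 * 4 ^ (p - 1) := by
      nth_rewrite 2 [← rpow_one (4:ℝ)]
      rw [← rpow_add (by norm_num : (0:ℝ) < 4)]
      congr 1
      ring
    have u4 : (4:ℝ) ^ (p - 1) * (7 * r) ^ (p - 1) = P := by
      rw [hPdef, ← mul_rpow (by norm_num : (0:ℝ) ≤ 4) (by linarith : (0:ℝ) ≤ 7 * r)]
      congr 1
      ring
    have u5 : (32 * r) ^ (p - 1) = (8/7 : ℝ) ^ (p - 1) * P := by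
      rw [hPdef, ← mul_rpow (by norm_num : (0:ℝ) ≤ 8/7) (by linarith : (0:ℝ) ≤ 28 * r)]
      congr 1
      ring
    have u6 : 1 + (p - 1) * (1/7) ≤ (8/7 : ℝ) ^ (p - 1) := by
      have := one_add_mul_self_le_rpow_one_add (by norm_num : (-1:ℝ) ≤ 1/7) (by linarith : 1 ≤ p - 1)
      norm_num at this ⊢
      linarith
    have w1 : 4 * p ≤ 64 * r * (1 + (p - 1) * (1/7)) := by
      have e0 : (0:ℝ) ≤ 64 * (1 + (p - 1) * (1/7)) := by linarith
      have h := mul_le_mul_of_nonneg_left hr1 e0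
      linarith only [h, hp]
    have cfact : 4 ^ p * p * (7 * r) ^ (p - 1) ≤ 2 * ((16 * r) ^ p * (3 * p + 2 ^ p)) := by
      have v1 : (4:ℝ) ^ p * p * (7 * r) ^ (p - 1) = 4 * p * P := by
        rw [u3, ← u4]; ring
      have v3 : (1 + (p - 1) * (1/7)) * P ≤ (8/7 : ℝ) ^ (p - 1) * P :=
        mul_le_mul_of_nonneg_right u6 hP0.le
      have v4 : 4 * p * P ≤ 64 * r * ((1 + (p - 1) * (1/7)) * P) := by
        have h := mul_le_mul_of_nonneg_right w1 hP0.le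
        linarith only [h]
      have v5 : (32 * r) ^ p ≤ (16 * r) ^ p * (3 * p + 2 ^ p) := by
        rw [← u1]
        apply mul_le_mul_of_nonneg_left (by linarith) (rpow_nonneg (by linarith) p)
      have v6 : 64 * r * ((8/7 : ℝ) ^ (p - 1) * P) = 2 * (32 * r) ^ p := by
        rw [← u5, ← u2]; ring
      have v7 : 64 * r * ((1 + (p - 1) * (1/7)) * P) ≤ 64 * r * ((8/7 : ℝ) ^ (p - 1) * P) :=
        mul_le_mul_of_nonneg_left v3 (by linarith)
      rw [v1]
      calc 4 * p * P ≤ 64 * r * ((1 + (p - 1) * (1/7)) * P) := v4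
        _ ≤ 64 * r * ((8/7 : ℝ) ^ (p - 1) * P) := v7
        _ = 2 * (32 * r) ^ p := v6
        _ ≤ 2 * ((16 * r) ^ p * (3 * p + 2 ^ p)) := by linarith
    -- put everything together
    have hA4 : (0:ℝ) < 4 * A := by linarith
    have main' : (s / 4) ^ p ≤ p * da * (7 * r) ^ (p - 1) / (4 * A) := by
      rw [le_div_iff₀ hA4]
      linarith [main]
    have step1 : s ^ p ≤ 4 ^ p * (p * da * (7 * r) ^ (p - 1) / (4 * A)) := by
      rw [hsp]
      exact mul_le_mul_of_nonneg_left main' (rpow_nonneg (by norm_num) p)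
    have step2 : 4 ^ p * (p * da * (7 * r) ^ (p - 1) / (4 * A))
        ≤ (16 * r) ^ p * ((3 * p + 2 ^ p) / (2 * A)) * da := by
      have w3 : (4:ℝ) ^ p * (p * da * (7 * r) ^ (p - 1) / (4 * A))
          = (4 ^ p * p * (7 * r) ^ (p - 1)) * da / (4 * A) := by ring
      have w4 : (16 * r) ^ p * ((3 * p + 2 ^ p) / (2 * A)) * da
          = (2 * ((16 * r) ^ p * (3 * p + 2 ^ p))) * da / (4 * A) := by
        field_simp
        ring
      rw [w3, w4]
      exact (div_le_div_iff_of_pos_right hA4).mpr (mul_le_mul_of_nonneg_right cfact hda0)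
    linarith only [step1, step2, hlt]
  exact le_trans hfin (le_max_right _ _)
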